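/- The sequent Add2(x,y,z) ⊢ Add1(x,y,z) is provable in the cyclic proof system CLKID^ω. -/

import Mathlib

namespace CLKID

/-- Terms of the language: variables, the constant `0`, and the unary function `s`. -/
inductive Tm : Type where
  | var : ℕ → Tm
  | zero : Tm
  | s : Tm → Tm
deriving DecidableEq

/-- `sIter n t` is the term `s^n t`. -/
def sIter : ℕ → Tm → Tm
  | 0, t => t
  | n + 1, t => Tm.s (sIter n t)

/-- Substitution on terms. -/
def Tm.subst (θ : ℕ → Tm) : Tm → Tm
  | .var x => θ x
  | .zero => .zero
  | .s t => .s (t.subst θ)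

/-- Free variables of a term. -/
def Tm.fv : Tm → Set ℕ
  | .var x => {x}
  | .zero => ∅
  | .s t => t.fv

/-- Subterms of a term. -/
def Tm.sub : Tm → Set Tm
  | .var x => {Tm.var x}
  | .zero => {Tm.zero}
  | .s t => insert (Tm.s t) t.sub

/-- The variable of a term (`none` if the term is of the form `s^n 0`). -/
def Tm.varOf : Tm → Option ℕ
  | .var x => some x
  | .zero => none
  | .s t => t.varOf

/-- Formulas: equations, the two inductive-predicate atoms `Add1`/`Add2`,
    and the usual first-order connectives and quantifiers. -/
inductive Fm : Type where
  | eq : Tm → Tm → Fm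
  | add1 : Tm → Tm → Tm → Fm
  | add2 : Tm → Tm → Tm → Fm
  | not : Fm → Fm
  | and : Fm → Fm → Fm
  | or : Fm → Fm → Fm
  | imp : Fm → Fm → Fm
  | all : ℕ → Fm → Fm
  | ex : ℕ → Fm → Fm
deriving DecidableEq

/-- Substitution on formulas. -/
def Fm.subst (θ : ℕ → Tm) : Fm → Fm
  | .eq t u => .eq (t.subst θ) (u.subst θ)
  | .add1 a b c => .add1 (a.subst θ) (b.subst θ) (c.subst θ)
  | .add2 a b c => .add2 (a.subst θ) (b.subst θ) (c.subst θ)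
  | .not φ => .not (φ.subst θ)
  | .and φ ψ => .and (φ.subst θ) (ψ.subst θ)
  | .or φ ψ => .or (φ.subst θ) (ψ.subst θ)
  | .imp φ ψ => .imp (φ.subst θ) (ψ.subst θ)
  | .all x φ => .all x (φ.subst (Function.update θ x (Tm.var x)))
  | .ex x φ => .ex x (φ.subst (Function.update θ x (Tm.var x)))

/-- Free variables of a formula. -/
def Fm.fv : Fm → Set ℕ
  | .eq t u => t.fv ∪ u.fv
  | .add1 a b c => a.fv ∪ b.fv ∪ c.fv
  | .add2 a b c => a.fv ∪ b.fv ∪ c.fv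
  | .not φ => φ.fv
  | .and φ ψ => φ.fv ∪ ψ.fv
  | .or φ ψ => φ.fv ∪ ψ.fv
  | .imp φ ψ => φ.fv ∪ ψ.fv
  | .all x φ => φ.fv \ {x}
  | .ex x φ => φ.fv \ {x}

/-- Terms occurring in a formula. -/
def Fm.tms : Fm → Set Tm
  | .eq t u => t.sub ∪ u.sub
  | .add1 a b c => a.sub ∪ b.sub ∪ c.sub
  | .add2 a b c => a.sub ∪ b.sub ∪ c.sub
  | .not φ => φ.tms
  | .and φ ψ => φ.tms ∪ ψ.tms
  | .or φ ψ => φ.tms ∪ ψ.tms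
  | .imp φ ψ => φ.tms ∪ ψ.tms
  | .all _ φ => φ.tms
  | .ex _ φ => φ.tms

/-- The substitution `[x := t]`. -/
def sub1 (x : ℕ) (t : Tm) : ℕ → Tm := fun y => if y = x then t else Tm.var y

/-- The simultaneous substitution `[v1 := t, v2 := u]`. -/
def sub2 (v1 v2 : ℕ) (t u : Tm) : ℕ → Tm :=
  fun z => if z = v1 then t else if z = v2 then u else Tm.var z

/-- `≡_Γ`: the smallest congruence relation on terms containing all pairs `(t, u)`
    with the equation `t = u` in `Γ`. -/
inductive EqvTm (Γ : Set Fm) : Tm → Tm → Prop where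
  | base {t u : Tm} : Fm.eq t u ∈ Γ → EqvTm Γ t u
  | refl (t : Tm) : EqvTm Γ t t
  | symm {t u : Tm} : EqvTm Γ t u → EqvTm Γ u t
  | trans {t u v : Tm} : EqvTm Γ t u → EqvTm Γ u v → EqvTm Γ t v
  | sCongr {t u : Tm} : EqvTm Γ t u → EqvTm Γ (Tm.s t) (Tm.s u)

/-- `t ~_Γ u` : `s^n t ≡_Γ s^m u` for some naturals `n`, `m`. -/
def DepTm (Γ : Set Fm) (t u : Tm) : Prop := ∃ n m : ℕ, EqvTm Γ (sIter n t) (sIter m u)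

/-- A sequent: a pair of finite sets of formulas. -/
structure Seq where
  ant : Finset Fm
  suc : Finset Fm

/-- The antecedent of a sequent, as a set of formulas. -/
def antSet (S : Seq) : Set Fm := ↑S.ant

/-- `[Γ]` from Lemma on chains: `{ s^n t1 = s^n t2 | t1 = t2 ∈ Γ or t2 = t1 ∈ Γ }`. -/
def brkt (Γ : Set Fm) : Set Fm :=
  {φ | ∃ (n : ℕ) (t1 t2 : Tm), φ = Fm.eq (sIter n t1) (sIter n t2) ∧
        (Fm.eq t1 t2 ∈ Γ ∨ Fm.eq t2 t1 ∈ Γ)}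

/-- `B1(Γ ⊢ Δ)` : second arguments of `Add1` atoms in the consequent. -/
def B1 (S : Seq) : Set Tm := {b | ∃ a c, Fm.add1 a b c ∈ S.suc}

/-- `C(Γ ⊢ Δ)` : third arguments of `Add2` atoms in the antecedent
    or `Add1` atoms in the consequent. -/
def Cset (S : Seq) : Set Tm :=
  {c | (∃ a b, Fm.add2 a b c ∈ S.ant) ∨ (∃ a b, Fm.add1 a b c ∈ S.suc)}

/-- Index sequent. -/
def IndexSequent (S : Seq) : Prop :=
  (∀ t ∈ B1 S, ∀ u ∈ Cset S, ¬ DepTm (antSet S) t u) ∧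
  (∀ b ∈ B1 S, ∀ b' ∈ B1 S, ∀ n m : ℕ, EqvTm (antSet S) (sIter n b) (sIter m b') → n = m)

/-! ## The cyclic proof systems `CLKID^ω` and `CLKID^ω_a` -/

/-- Rule labels; each label carries the instance data needed to describe the
    rule application (principal formulas, substitutions, case variables, ...).
    `bud` labels bud leaves of cyclic derivation trees. -/
inductive Rule : Type where
  | ax
  | weak
  | cut (φ : Fm)
  | subst (θ : ℕ → Tm)
  | negL (φ : Fm)
  | negR (φ : Fm)
  | andL (φ ψ : Fm)
  | andR (φ ψ : Fm)
  | orL (φ ψ : Fm)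
  | orR (φ ψ : Fm)
  | impL (φ ψ : Fm)
  | impR (φ ψ : Fm)
  | allL (x : ℕ) (t : Tm) (φ : Fm)
  | allR (x : ℕ) (φ : Fm)
  | exL (x : ℕ) (φ : Fm)
  | exR (x : ℕ) (t : Tm) (φ : Fm)
  | eqR (t : Tm)
  | eqL (v1 v2 : ℕ) (t u : Tm)
  | eqLa (v1 v2 : ℕ) (t u : Tm)
  | add1R1
  | add1R2 (a b c : Tm)
  | add2R1
  | add2R2 (a b c : Tm)
  | caseAdd1 (a b c : Tm) (x y z : ℕ)
  | caseAdd2 (a b c : Tm) (x y z : ℕ)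
  | bud

/-- `Inf r S L` : the sequent `S` follows from the list of premises `L`
    by the rule (instance) `r`. -/
inductive Inf : Rule → Seq → List Seq → Prop where
  | ax {Γ Δ : Finset Fm} :
      (Γ ∩ Δ).Nonempty → Inf .ax ⟨Γ, Δ⟩ []
  | weak {Γ Δ Γ' Δ' : Finset Fm} :
      Γ' ⊆ Γ → Δ' ⊆ Δ → Inf .weak ⟨Γ, Δ⟩ [⟨Γ', Δ'⟩]
  | cut {Γ Δ : Finset Fm} {φ : Fm} :
      Inf (.cut φ) ⟨Γ, Δ⟩ [⟨Γ, insert φ Δ⟩, ⟨insert φ Γ, Δ⟩]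
  | subst {Γ Δ : Finset Fm} {θ : ℕ → Tm} :
      Inf (.subst θ) ⟨Γ.image (Fm.subst θ), Δ.image (Fm.subst θ)⟩ [⟨Γ, Δ⟩]
  | negL {Γ Δ : Finset Fm} {φ : Fm} :
      Inf (.negL φ) ⟨insert (.not φ) Γ, Δ⟩ [⟨Γ, insert φ Δ⟩]
  | negR {Γ Δ : Finset Fm} {φ : Fm} :
      Inf (.negR φ) ⟨Γ, insert (.not φ) Δ⟩ [⟨insert φ Γ, Δ⟩]
  | andL {Γ Δ : Finset Fm} {φ ψ : Fm} :
      Inf (.andL φ ψ) ⟨insert (.and φ ψ) Γ, Δ⟩ [⟨insert φ (insert ψ Γ), Δ⟩]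
  | andR {Γ Δ : Finset Fm} {φ ψ : Fm} :
      Inf (.andR φ ψ) ⟨Γ, insert (.and φ ψ) Δ⟩ [⟨Γ, insert φ Δ⟩, ⟨Γ, insert ψ Δ⟩]
  | orL {Γ Δ : Finset Fm} {φ ψ : Fm} :
      Inf (.orL φ ψ) ⟨insert (.or φ ψ) Γ, Δ⟩ [⟨insert φ Γ, Δ⟩, ⟨insert ψ Γ, Δ⟩]
  | orR {Γ Δ : Finset Fm} {φ ψ : Fm} :
      Inf (.orR φ ψ) ⟨Γ, insert (.or φ ψ) Δ⟩ [⟨Γ, insert φ (insert ψ Δ)⟩]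
  | impL {Γ Δ : Finset Fm} {φ ψ : Fm} :
      Inf (.impL φ ψ) ⟨insert (.imp φ ψ) Γ, Δ⟩ [⟨Γ, insert φ Δ⟩, ⟨insert ψ Γ, Δ⟩]
  | impR {Γ Δ : Finset Fm} {φ ψ : Fm} :
      Inf (.impR φ ψ) ⟨Γ, insert (.imp φ ψ) Δ⟩ [⟨insert φ Γ, insert ψ Δ⟩]
  | allL {Γ Δ : Finset Fm} {x : ℕ} {t : Tm} {φ : Fm} :
      Inf (.allL x t φ) ⟨insert (.all x φ) Γ, Δ⟩ [⟨insert (φ.subst (sub1 x t)) Γ, Δ⟩]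
  | allR {Γ Δ : Finset Fm} {x : ℕ} {φ : Fm} :
      (∀ ψ ∈ Γ ∪ Δ, x ∉ Fm.fv ψ) →
      Inf (.allR x φ) ⟨Γ, insert (.all x φ) Δ⟩ [⟨Γ, insert φ Δ⟩]
  | exL {Γ Δ : Finset Fm} {x : ℕ} {φ : Fm} :
      (∀ ψ ∈ Γ ∪ Δ, x ∉ Fm.fv ψ) →
      Inf (.exL x φ) ⟨insert (.ex x φ) Γ, Δ⟩ [⟨insert φ Γ, Δ⟩]
  | exR {Γ Δ : Finset Fm} {x : ℕ} {t : Tm} {φ : Fm} :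
      Inf (.exR x t φ) ⟨Γ, insert (.ex x φ) Δ⟩ [⟨Γ, insert (φ.subst (sub1 x t)) Δ⟩]
  | eqR {Γ Δ : Finset Fm} {t : Tm} :
      Inf (.eqR t) ⟨Γ, insert (.eq t t) Δ⟩ []
  | eqL {Γ Δ : Finset Fm} {v1 v2 : ℕ} {t u : Tm} :
      Inf (.eqL v1 v2 t u)
        ⟨insert (.eq t u) (Γ.image (Fm.subst (sub2 v1 v2 t u))),
          Δ.image (Fm.subst (sub2 v1 v2 t u))⟩
        [⟨Γ.image (Fm.subst (sub2 v1 v2 u t)), Δ.image (Fm.subst (sub2 v1 v2 u t))⟩]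
  | eqLa {Γ Δ : Finset Fm} {v1 v2 : ℕ} {t u : Tm} :
      Inf (.eqLa v1 v2 t u)
        ⟨insert (.eq t u) (Γ.image (Fm.subst (sub2 v1 v2 t u))),
          Δ.image (Fm.subst (sub2 v1 v2 t u))⟩
        [⟨insert (.eq t u) (Γ.image (Fm.subst (sub2 v1 v2 u t))),
          Δ.image (Fm.subst (sub2 v1 v2 u t))⟩]
  | add1R1 {Γ Δ : Finset Fm} {b : Tm} :
      Inf .add1R1 ⟨Γ, insert (.add1 .zero b b) Δ⟩ []
  | add1R2 {Γ Δ : Finset Fm} {a b c : Tm} :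
      Inf (.add1R2 a b c) ⟨Γ, insert (.add1 (.s a) b (.s c)) Δ⟩ [⟨Γ, insert (.add1 a b c) Δ⟩]
  | add2R1 {Γ Δ : Finset Fm} {b : Tm} :
      Inf .add2R1 ⟨Γ, insert (.add2 .zero b b) Δ⟩ []
  | add2R2 {Γ Δ : Finset Fm} {a b c : Tm} :
      Inf (.add2R2 a b c) ⟨Γ, insert (.add2 (.s a) b c) Δ⟩ [⟨Γ, insert (.add2 a (.s b) c) Δ⟩]
  | caseAdd1 {Γ Δ : Finset Fm} {a b c : Tm} {x y z : ℕ} :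
      x ≠ y → x ≠ z → y ≠ z →
      (∀ ψ ∈ insert (Fm.add1 a b c) (Γ ∪ Δ), x ∉ Fm.fv ψ ∧ y ∉ Fm.fv ψ ∧ z ∉ Fm.fv ψ) →
      Inf (.caseAdd1 a b c x y z) ⟨insert (.add1 a b c) Γ, Δ⟩
        [⟨insert (.eq a .zero) (insert (.eq b (.var y)) (insert (.eq c (.var y)) Γ)), Δ⟩,
         ⟨insert (.eq a (.s (.var x))) (insert (.eq b (.var y)) (insert (.eq c (.s (.var z)))
            (insert (.add1 (.var x) (.var y) (.var z)) Γ))), Δ⟩]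
  | caseAdd2 {Γ Δ : Finset Fm} {a b c : Tm} {x y z : ℕ} :
      x ≠ y → x ≠ z → y ≠ z →
      (∀ ψ ∈ insert (Fm.add2 a b c) (Γ ∪ Δ), x ∉ Fm.fv ψ ∧ y ∉ Fm.fv ψ ∧ z ∉ Fm.fv ψ) →
      Inf (.caseAdd2 a b c x y z) ⟨insert (.add2 a b c) Γ, Δ⟩
        [⟨insert (.eq a .zero) (insert (.eq b (.var y)) (insert (.eq c (.var y)) Γ)), Δ⟩,
         ⟨insert (.eq a (.s (.var x))) (insert (.eq b (.var y)) (insert (.eq c (.var z))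
            (insert (.add2 (.var x) (.s (.var y)) (.var z)) Γ))), Δ⟩]

/-- A labeling of tree nodes (finite sequences of naturals) by sequents and rules;
    `none` means the node is not in the tree. -/
abbrev Lbl : Type := List ℕ → Option (Seq × Rule)

/-- The children of `σ` are labeled exactly by the premise list `prems`. -/
def childrenOK (f : Lbl) (σ : List ℕ) (prems : List Seq) : Prop :=
  (∀ i : Fin prems.length, ∃ r', f (σ ++ [(i : ℕ)]) = some (prems.get i, r')) ∧
  (∀ i : ℕ, prems.length ≤ i → f (σ ++ [i]) = none)

/-- Derivation trees (possibly infinite): prefix-closed domain, each non-bud node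
    is the conclusion of a rule whose premises label its children, buds are leaves. -/
structure DTree where
  label : Lbl
  root_def : label [] ≠ none
  prefix_closed : ∀ σ τ : List ℕ, label (σ ++ τ) ≠ none → label σ ≠ none
  wf : ∀ σ S r, label σ = some (S, r) →
    (r = Rule.bud ∧ ∀ i : ℕ, label (σ ++ [i]) = none) ∨
    (r ≠ Rule.bud ∧ ∃ prems, Inf r S prems ∧ childrenOK label σ prems)

/-- `σ` is a bud of the labeling `f`. -/
def budAt (f : Lbl) (σ : List ℕ) : Prop := ∃ S, f σ = some (S, Rule.bud)

/-- `σ` is an inner node of `f` labeled with the sequent `S`. -/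
def innerWith (f : Lbl) (σ : List ℕ) (S : Seq) : Prop :=
  ∃ r, f σ = some (S, r) ∧ r ≠ Rule.bud

/-- A pre-proof: a finite derivation tree together with a function assigning to
    each bud a companion, i.e. an inner node labeled with the same sequent. -/
structure PreProof where
  D : DTree
  fin : {σ : List ℕ | D.label σ ≠ none}.Finite
  C : List ℕ → List ℕ
  comp : ∀ σ S, D.label σ = some (S, Rule.bud) → innerWith D.label (C σ) S

/-- Cycle-normality: every companion is an ancestor of its bud. -/
def PreProof.CycleNormal (P : PreProof) : Prop :=
  ∀ σ S, P.D.label σ = some (S, Rule.bud) → P.C σ <+: σ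

/-- `T` is the tree-unfolding of the pre-proof `P`: it agrees with `P.D` on
    non-bud nodes, below a bud it continues as below the bud's companion, and it
    is empty on nodes not in `P.D` having no bud prefix. -/
def IsUnfolding (P : PreProof) (T : Lbl) : Prop :=
  (∀ σ, P.D.label σ ≠ none → ¬ budAt P.D.label σ → T σ = P.D.label σ) ∧
  (∀ σ₁ σ₂ : List ℕ, budAt P.D.label σ₁ → T (σ₁ ++ σ₂) = T (P.C σ₁ ++ σ₂)) ∧
  (∀ σ, P.D.label σ = none → (∀ σ₁, σ₁ <+: σ → ¬ budAt P.D.label σ₁) → T σ = none)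

/-- An infinite path in the labeling `f`. -/
def IsInfPath (f : Lbl) (p : ℕ → List ℕ) : Prop :=
  (∀ i, f (p i) ≠ none) ∧ (∀ i, ∃ n : ℕ, p (i + 1) = p i ++ [n])

/-- Atomic formulas with an inductive predicate. -/
def isIndAtom (φ : Fm) : Prop :=
  (∃ a b c, φ = Fm.add1 a b c) ∨ (∃ a b c, φ = Fm.add2 a b c)

/-- A progressing trace step: the traced formula is the principal formula of a
    case rule and its successor (in the corresponding case distinction, child `j`)
    is a case-descendant. -/
def progStep : Rule → ℕ → Fm → Fm → Prop := fun r j τ τ' =>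
  match r with
  | .caseAdd1 a b c x y z =>
      τ = Fm.add1 a b c ∧ j = 1 ∧ τ' = Fm.add1 (.var x) (.var y) (.var z)
  | .caseAdd2 a b c x y z =>
      τ = Fm.add2 a b c ∧ j = 1 ∧ τ' = Fm.add2 (.var x) (.s (.var y)) (.var z)
  | _ => False

/-- The trace connection relation between the traced formula at a conclusion of a
    rule `r` and the traced formula at its `j`-th premise. -/
def connStep : Rule → ℕ → Fm → Fm → Prop := fun r j τ τ' =>
  match r with
  | .subst θ => τ = Fm.subst θ τ'
  | .eqL v1 v2 t u =>
      ∃ F : Fm, τ = Fm.subst (sub2 v1 v2 t u) F ∧ τ' = Fm.subst (sub2 v1 v2 u t) F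
  | .eqLa v1 v2 t u =>
      ∃ F : Fm, τ = Fm.subst (sub2 v1 v2 t u) F ∧ τ' = Fm.subst (sub2 v1 v2 u t) F
  | .caseAdd1 a b c x y z => τ' = τ ∨ progStep (.caseAdd1 a b c x y z) j τ τ'
  | .caseAdd2 a b c x y z => τ' = τ ∨ progStep (.caseAdd2 a b c x y z) j τ τ'
  | _ => τ' = τ

/-- `τ` is a trace following the tail from `k` of the path `p` in `f`. -/
def IsTraceFrom (f : Lbl) (p : ℕ → List ℕ) (k : ℕ) (τ : ℕ → Fm) : Prop :=
  ∀ i, k ≤ i →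
    ∃ (S : Seq) (r : Rule) (j : ℕ), f (p i) = some (S, r) ∧ τ i ∈ S.ant ∧ isIndAtom (τ i) ∧
      p (i + 1) = p i ++ [j] ∧ connStep r j (τ i) (τ (i + 1))

/-- The trace `τ` progresses at position `i` of the path `p`. -/
def progAt (f : Lbl) (p : ℕ → List ℕ) (τ : ℕ → Fm) (i : ℕ) : Prop :=
  ∃ (S : Seq) (r : Rule) (j : ℕ), f (p i) = some (S, r) ∧ p (i + 1) = p i ++ [j] ∧
    progStep r j (τ i) (τ (i + 1))

/-- The global trace condition for a (possibly infinite) labeling `f`. -/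
def GTC (f : Lbl) : Prop :=
  ∀ p : ℕ → List ℕ, IsInfPath f p →
    ∃ (k : ℕ) (τ : ℕ → Fm), IsTraceFrom f p k τ ∧
      ∀ n : ℕ, ∃ i, n ≤ i ∧ k ≤ i ∧ progAt f p τ i

/-- A pre-proof is a proof when its tree-unfolding satisfies the
    global trace condition. -/
def PreProof.IsProof (P : PreProof) : Prop := ∃ T : Lbl, IsUnfolding P T ∧ GTC T

/-- Some rule satisfying `Q` occurs in the labeling `f`. -/
def usesRule (f : Lbl) (Q : Rule → Prop) : Prop := ∃ σ S r, f σ = some (S, r) ∧ Q r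

/-- No occurrence of (Cut). -/
def PreProof.CutFree (P : PreProof) : Prop :=
  ¬ usesRule P.D.label (fun r => ∃ φ, r = Rule.cut φ)

/-- No occurrence of (= L_a): the pre-proof is a `CLKID^ω` pre-proof. -/
def PreProof.NoEqLa (P : PreProof) : Prop :=
  ¬ usesRule P.D.label (fun r => ∃ v1 v2 t u, r = Rule.eqLa v1 v2 t u)

/-- No occurrence of (= L): the pre-proof is a `CLKID^ω_a` pre-proof. -/
def PreProof.NoEqL (P : PreProof) : Prop :=
  ¬ usesRule P.D.label (fun r => ∃ v1 v2 t u, r = Rule.eqL v1 v2 t u)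

/-- The conclusion of the pre-proof is the sequent `S`. -/
def PreProof.Concl (P : PreProof) (S : Seq) : Prop := ∃ r, P.D.label [] = some (S, r)

/-- Provability in `CLKID^ω`. -/
def ProvableW (S : Seq) : Prop :=
  ∃ P : PreProof, P.IsProof ∧ P.NoEqLa ∧ P.Concl S

/-- Provability in `CLKID^ω_a`. -/
def ProvableWa (S : Seq) : Prop :=
  ∃ P : PreProof, P.IsProof ∧ P.NoEqL ∧ P.Concl S

/-- Cut-free provability in `CLKID^ω`. -/
def CutFreeProvableW (S : Seq) : Prop :=
  ∃ P : PreProof, P.IsProof ∧ P.CutFree ∧ P.NoEqLa ∧ P.Concl S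

/-- The sequent `Add2(x, y, z) ⊢ Add1(x, y, z)`. -/
def goalSeq : Seq :=
  ⟨{Fm.add2 (Tm.var 0) (Tm.var 1) (Tm.var 2)}, {Fm.add1 (Tm.var 0) (Tm.var 1) (Tm.var 2)}⟩

/-- A cut-free cycle-normal `CLKID^ω_a` proof of `Add2(x,y,z) ⊢ Add1(x,y,z)`. -/
def IsCNProofOfGoal (P : PreProof) : Prop :=
  P.IsProof ∧ P.CutFree ∧ P.NoEqL ∧ P.CycleNormal ∧ P.Concl goalSeq

/-- The index of an `Add2` atom with second argument `b` in the sequent `S` is `⊥`. -/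
def IndexBot (S : Seq) (b : Tm) : Prop :=
  ∀ a' b' c', Fm.add1 a' b' c' ∈ S.suc → ¬ DepTm (antSet S) b b'

/-- `σ` is a switching point of `f`: the conclusion of a `(Case Add2)` rule whose
    principal formula has index `⊥`. -/
def SwitchingPoint (f : Lbl) (σ : List ℕ) : Prop :=
  ∃ S a b c x y z, f σ = some (S, Rule.caseAdd2 a b c x y z) ∧ IndexBot S b

/-- `σ` is the conclusion of a `(Case Add2)` rule in `f`. -/
def CaseAdd2At (f : Lbl) (σ : List ℕ) : Prop :=
  ∃ S a b c x y z, f σ = some (S, Rule.caseAdd2 a b c x y z)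

/-- The node `σ` of `f` is labeled with an index sequent. -/
def IndexSequentAt (f : Lbl) (σ : List ℕ) : Prop :=
  ∃ S r, f σ = some (S, r) ∧ IndexSequent S

/-- A finite index path `p 0, …, p N` in `f`:  its first sequent is an index
    sequent, and a step to the left premise (child `0`) of a `(Case Add2)` rule
    only happens at switching points. -/
def IsIndexPathUpTo (f : Lbl) (p : ℕ → List ℕ) (N : ℕ) : Prop :=
  (∀ i, i ≤ N → f (p i) ≠ none) ∧
  (∀ i, i < N → ∃ n : ℕ, p (i + 1) = p i ++ [n]) ∧
  IndexSequentAt f (p 0) ∧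
  (∀ i, i < N → CaseAdd2At f (p i) → p (i + 1) = p i ++ [0] → SwitchingPoint f (p i))

/-- An infinite index path in `f`. -/
def IsInfIndexPath (f : Lbl) (p : ℕ → List ℕ) : Prop :=
  IsInfPath f p ∧
  IndexSequentAt f (p 0) ∧
  (∀ i, CaseAdd2At f (p i) → p (i + 1) = p i ++ [0] → SwitchingPoint f (p i))

/-- The child index chosen by the rightmost path: the right assumption of
    `(Case Add2)`, the unique premise otherwise. -/
def rightIdx : Rule → ℕ := fun r =>
  match r with
  | .caseAdd2 _ _ _ _ _ _ => 1
  | _ => 0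

/-- One step of the rightmost path in `f`. -/
def RightStep (f : Lbl) (σ σ' : List ℕ) : Prop :=
  ∃ S r, f σ = some (S, r) ∧ σ' = σ ++ [rightIdx r] ∧ f σ' ≠ none

/-- `A(Γ ⊢ Δ)` of Lemma `abc_relations`. -/
def Aset (S : Seq) : Set Tm :=
  {a | (∃ b c, Fm.add2 a b c ∈ S.ant) ∨ (∃ b c, Fm.add1 a b c ∈ S.suc) ∨ a = Tm.zero}

/-- `BC(Γ ⊢ Δ)` of Lemma `abc_relations`. -/
def BCset (S : Seq) : Set Tm :=
  {t | (∃ a c, Fm.add2 a t c ∈ S.ant) ∨ (∃ a b, Fm.add2 a b t ∈ S.ant) ∨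
       (∃ a c, Fm.add1 a t c ∈ S.suc) ∨ (∃ a b, Fm.add1 a b t ∈ S.suc)}

/-- The rules that can occur in a cut-free cycle-normal `CLKID^ω_a` proof of
    `Add2(x,y,z) ⊢ Add1(x,y,z)` (plus bud labels). -/
def allowedRule (r : Rule) : Prop :=
  r = Rule.bud ∨ r = Rule.weak ∨ (∃ θ, r = Rule.subst θ) ∨
  (∃ v1 v2 t u, r = Rule.eqLa v1 v2 t u) ∨
  (∃ a b c x y z, r = Rule.caseAdd2 a b c x y z) ∨
  r = Rule.add1R1 ∨ (∃ a b c, r = Rule.add1R2 a b c)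

/-! ### Auxiliary material for the cyclic proof of `Add2 ⊢ Add1` -/

instance : DecidableEq Seq := fun a b =>
  decidable_of_iff (a.ant = b.ant ∧ a.suc = b.suc) (by cases a; cases b; simp)

namespace BT

abbrev x0 : Tm := .var 0
abbrev x1 : Tm := .var 1
abbrev x2 : Tm := .var 2
abbrev x3 : Tm := .var 3
abbrev x4 : Tm := .var 4
abbrev x5 : Tm := .var 5
abbrev x6 : Tm := .var 6
abbrev x7 : Tm := .var 7

/-- the `Add2` atom in the step case -/
abbrev A2s : Fm := .add2 x3 (.s x4) x5

def SB0 : Seq := ⟨{.eq x0 .zero, .eq x1 x4, .eq x2 x4}, {.add1 x0 x1 x2}⟩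
def SB1 : Seq := ⟨{.eq x1 x4, .eq x2 x4}, {.add1 .zero x1 x2}⟩
def SB2 : Seq := ⟨{.eq x2 x4}, {.add1 .zero x4 x2}⟩
def SB3 : Seq := ⟨∅, {.add1 .zero x4 x4}⟩

def SS0 : Seq := ⟨{.eq x0 (.s x3), .eq x1 x4, .eq x2 x5, A2s}, {.add1 x0 x1 x2}⟩
def SS1 : Seq := ⟨{.eq x1 x4, .eq x2 x5, A2s}, {.add1 (.s x3) x1 x2}⟩
def SS2 : Seq := ⟨{.eq x2 x5, A2s}, {.add1 (.s x3) x4 x2}⟩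
def SS3 : Seq := ⟨{A2s}, {.add1 (.s x3) x4 x5}⟩
def SCL : Seq := ⟨{A2s}, {.add1 x3 (.s x4) x5, .add1 (.s x3) x4 x5}⟩
def SCL1 : Seq := ⟨{A2s}, {.add1 x3 (.s x4) x5}⟩
def SCR : Seq := ⟨{.add1 x3 (.s x4) x5, A2s}, {.add1 (.s x3) x4 x5}⟩
def SL : Seq := ⟨{.add1 x3 (.s x4) x5}, {.add1 (.s x3) x4 x5}⟩

def SP0 : Seq := ⟨{.eq x3 .zero, .eq (.s x4) x1, .eq x5 x1}, {.add1 (.s x3) x4 x5}⟩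
def SQ1 : Seq := ⟨{.eq (.s x4) x1, .eq x5 x1}, {.add1 (.s .zero) x4 x5}⟩
def SQ2 : Seq := ⟨{.eq (.s x4) x1}, {.add1 (.s .zero) x4 x1}⟩
def SQ3 : Seq := ⟨∅, {.add1 (.s .zero) x4 (.s x4)}⟩
def SQ4 : Seq := ⟨∅, {.add1 .zero x4 x4}⟩

def SP1 : Seq := ⟨{.eq x3 (.s x0), .eq (.s x4) x1, .eq x5 (.s x2), .add1 x0 x1 x2},
                  {.add1 (.s x3) x4 x5}⟩
def SR1 : Seq := ⟨{.eq (.s x4) x1, .eq x5 (.s x2), .add1 x0 x1 x2}, {.add1 (.s (.s x0)) x4 x5}⟩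
def SR2 : Seq := ⟨{.eq (.s x4) x1, .add1 x0 x1 x2}, {.add1 (.s (.s x0)) x4 (.s x2)}⟩
def SR3 : Seq := ⟨{.add1 x0 (.s x4) x2}, {.add1 (.s (.s x0)) x4 (.s x2)}⟩
def SR4 : Seq := ⟨{.add1 x0 (.s x4) x2}, {.add1 (.s x0) x4 x2}⟩

def θM : ℕ → Tm := fun n => if n = 0 then x3 else if n = 1 then .s x4 else if n = 2 then x5
  else .var n
def θL : ℕ → Tm := fun n => if n = 3 then x0 else if n = 5 then x2 else .var n

def find (σ : List ℕ) : List (List ℕ × Seq × Rule) → Option (Seq × Rule)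
  | [] => none
  | e :: l => if σ = e.1 then some e.2 else find σ l

lemma find_ne_none {σ : List ℕ} : ∀ {l : List (List ℕ × Seq × Rule)},
    find σ l ≠ none → σ ∈ l.map Prod.fst := by
  intro l
  induction l with
  | nil => intro h; exact absurd rfl h
  | cons e l ih =>
    intro h
    by_cases he : σ = e.1
    · exact he ▸ List.mem_cons_self
    · simp only [find, if_neg he] at h
      exact List.mem_cons_of_mem _ (ih h)

def table : List (List ℕ × Seq × Rule) :=
  [([], goalSeq, .caseAdd2 x0 x1 x2 3 4 5),
  ([0], SB0, .eqL 6 7 x0 .zero),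
  ([0,0], SB1, .eqL 6 7 x1 x4),
  ([0,0,0], SB2, .eqL 6 7 x2 x4),
  ([0,0,0,0], SB3, .add1R1),
  ([1], SS0, .eqL 6 7 x0 (.s x3)),
  ([1,0], SS1, .eqL 6 7 x1 x4),
  ([1,0,0], SS2, .eqL 6 7 x2 x5),
  ([1,0,0,0], SS3, .cut (.add1 x3 (.s x4) x5)),
  ([1,0,0,0,0], SCL, .weak),
  ([1,0,0,0,0,0], SCL1, .subst θM),
  ([1,0,0,0,0,0,0], goalSeq, .bud),
  ([1,0,0,0,1], SCR, .weak),
  ([1,0,0,0,1,0], SL, .caseAdd1 x3 (.s x4) x5 0 1 2),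
  ([1,0,0,0,1,0,0], SP0, .eqL 6 7 x3 .zero),
  ([1,0,0,0,1,0,0,0], SQ1, .eqL 6 7 x5 x1),
  ([1,0,0,0,1,0,0,0,0], SQ2, .eqL 6 7 (.s x4) x1),
  ([1,0,0,0,1,0,0,0,0,0], SQ3, .add1R2 .zero x4 x4),
  ([1,0,0,0,1,0,0,0,0,0,0], SQ4, .add1R1),
  ([1,0,0,0,1,0,1], SP1, .eqL 6 7 x3 (.s x0)),
  ([1,0,0,0,1,0,1,0], SR1, .eqL 6 7 x5 (.s x2)),
  ([1,0,0,0,1,0,1,0,0], SR2, .eqL 6 7 (.s x4) x1),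
  ([1,0,0,0,1,0,1,0,0,0], SR3, .add1R2 (.s x0) x4 x2),
  ([1,0,0,0,1,0,1,0,0,0,0], SR4, .subst θL),
  ([1,0,0,0,1,0,1,0,0,0,0,0], SL, .bud)]

/-- The finite derivation tree, as a labeling function. -/
def lab : Lbl := fun σ => find σ table

def keyProp (σ : List ℕ) : Prop :=
  σ = [] ∨ σ = [0] ∨ σ = [0,0] ∨ σ = [0,0,0] ∨ σ = [0,0,0,0] ∨
  σ = [1] ∨ σ = [1,0] ∨ σ = [1,0,0] ∨ σ = [1,0,0,0] ∨ σ = [1,0,0,0,0] ∨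
  σ = [1,0,0,0,0,0] ∨ σ = [1,0,0,0,0,0,0] ∨ σ = [1,0,0,0,1] ∨ σ = [1,0,0,0,1,0] ∨
  σ = [1,0,0,0,1,0,0] ∨ σ = [1,0,0,0,1,0,0,0] ∨ σ = [1,0,0,0,1,0,0,0,0] ∨
  σ = [1,0,0,0,1,0,0,0,0,0] ∨ σ = [1,0,0,0,1,0,0,0,0,0,0] ∨
  σ = [1,0,0,0,1,0,1] ∨ σ = [1,0,0,0,1,0,1,0] ∨ σ = [1,0,0,0,1,0,1,0,0] ∨
  σ = [1,0,0,0,1,0,1,0,0,0] ∨ σ = [1,0,0,0,1,0,1,0,0,0,0] ∨ σ = [1,0,0,0,1,0,1,0,0,0,0,0]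

lemma dom_inv {σ : List ℕ} (h : lab σ ≠ none) : keyProp σ := by
  have := find_ne_none h
  simp only [table, List.map, List.mem_cons, List.not_mem_nil, or_false] at this
  exact this

lemma lab_none {σ : List ℕ} (h : ¬ keyProp σ) : lab σ = none := by
  by_contra h'
  exact h (dom_inv h')

end BT

namespace BT

lemma key_lab {σ : List ℕ} (h : keyProp σ) : lab σ ≠ none := by
  unfold keyProp at h
  rcases h with h|h|h|h|h|h|h|h|h|h|h|h|h|h|h|h|h|h|h|h|h|h|h|h|h <;>
    subst h <;> exact fun hc => Option.some_ne_none _ hc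

lemma key_parent {ρ : List ℕ} {n : ℕ} (h : keyProp (ρ ++ [n])) : keyProp ρ := by
  unfold keyProp at h ⊢
  rcases h with h|h|h|h|h|h|h|h|h|h|h|h|h|h|h|h|h|h|h|h|h|h|h|h|h
  · exact absurd h (by simp)
  all_goals {
    have h2 := congrArg List.dropLast h
    rw [List.dropLast_concat] at h2
    rw [h2]
    decide }

lemma lab_pc : ∀ (τ σ : List ℕ), lab (σ ++ τ) ≠ none → lab σ ≠ none := by
  intro τ
  induction τ using List.reverseRecOn with
  | nil => intro σ h; simpa using h
  | append_singleton τ n ih =>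
    intro σ h
    rw [← List.append_assoc] at h
    exact ih σ (key_lab (key_parent (dom_inv h)))

lemma infOf {r : Rule} {S S' : Seq} {L L' : List Seq}
    (h : Inf r S' L') (h1 : S' = S) (h2 : L' = L) : Inf r S L := h1 ▸ h2 ▸ h

end BT


namespace BT

set_option maxHeartbeats 3000000 in
lemma wfLab : ∀ (σ : List ℕ) (S : Seq) (r : Rule), lab σ = some (S, r) →
    (r = Rule.bud ∧ ∀ i : ℕ, lab (σ ++ [i]) = none) ∨
    (r ≠ Rule.bud ∧ ∃ prems, Inf r S prems ∧ childrenOK lab σ prems) := by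
  intro σ S r h
  have hk : keyProp σ := dom_inv (by rw [h]; exact fun hc => Option.some_ne_none _ hc)
  unfold keyProp at hk
  rcases hk with hk|hk|hk|hk|hk|hk|hk|hk|hk|hk|hk|hk|hk|hk|hk|hk|hk|hk|hk|hk|hk|hk|hk|hk|hk <;> subst hk <;>
    injection h with h1 <;> injection h1 with hS hr <;> subst hS <;> subst hr

  · refine Or.inr ⟨by simp, [SB0, SS0], ?_, ?_, ?_⟩
    · refine infOf (@Inf.caseAdd2 ∅ {Fm.add1 x0 x1 x2} x0 x1 x2 3 4 5 (by decide) (by decide)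
        (by decide) ?_) (by decide) (by decide)
      intro ψ hψ
      fin_cases hψ <;> refine ⟨?_, ?_, ?_⟩ <;> simp [Fm.fv, Tm.fv]
    · intro i; fin_cases i
      · exact ⟨_, rfl⟩
      · exact ⟨_, rfl⟩
    · intro i _
      apply lab_none
      unfold keyProp
      rintro (h|h|h|h|h|h|h|h|h|h|h|h|h|h|h|h|h|h|h|h|h|h|h|h|h) <;> simp_all
  · refine Or.inr ⟨by simp, [SB1], ?_, ?_, ?_⟩
    · exact infOf (@Inf.eqL {Fm.eq x1 x4, Fm.eq x2 x4} {Fm.add1 x6 x1 x2} 6 7 x0 .zero) (by decide) (by decide)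
    · intro i; fin_cases i; exact ⟨_, rfl⟩
    · intro i _
      apply lab_none
      unfold keyProp
      rintro (h|h|h|h|h|h|h|h|h|h|h|h|h|h|h|h|h|h|h|h|h|h|h|h|h) <;> simp_all
  · refine Or.inr ⟨by simp, [SB2], ?_, ?_, ?_⟩
    · exact infOf (@Inf.eqL {Fm.eq x2 x4} {Fm.add1 .zero x6 x2} 6 7 x1 x4) (by decide) (by decide)
    · intro i; fin_cases i; exact ⟨_, rfl⟩
    · intro i _
      apply lab_none
      unfold keyProp
      rintro (h|h|h|h|h|h|h|h|h|h|h|h|h|h|h|h|h|h|h|h|h|h|h|h|h) <;> simp_all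
  · refine Or.inr ⟨by simp, [SB3], ?_, ?_, ?_⟩
    · exact infOf (@Inf.eqL ∅ {Fm.add1 .zero x4 x6} 6 7 x2 x4) (by decide) (by decide)
    · intro i; fin_cases i; exact ⟨_, rfl⟩
    · intro i _
      apply lab_none
      unfold keyProp
      rintro (h|h|h|h|h|h|h|h|h|h|h|h|h|h|h|h|h|h|h|h|h|h|h|h|h) <;> simp_all
  · refine Or.inr ⟨by simp, [], ?_, ?_, ?_⟩
    · exact infOf (@Inf.add1R1 ∅ ∅ x4) (by decide) (by decide)
    · intro i; exact absurd i.2 (by simp)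
    · intro i _
      apply lab_none
      unfold keyProp
      rintro (h|h|h|h|h|h|h|h|h|h|h|h|h|h|h|h|h|h|h|h|h|h|h|h|h) <;> simp_all
  · refine Or.inr ⟨by simp, [SS1], ?_, ?_, ?_⟩
    · exact infOf (@Inf.eqL {Fm.eq x1 x4, Fm.eq x2 x5, A2s} {Fm.add1 x6 x1 x2} 6 7 x0 (.s x3)) (by decide) (by decide)
    · intro i; fin_cases i; exact ⟨_, rfl⟩
    · intro i _
      apply lab_none
      unfold keyProp
      rintro (h|h|h|h|h|h|h|h|h|h|h|h|h|h|h|h|h|h|h|h|h|h|h|h|h) <;> simp_all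
  · refine Or.inr ⟨by simp, [SS2], ?_, ?_, ?_⟩
    · exact infOf (@Inf.eqL {Fm.eq x2 x5, A2s} {Fm.add1 (.s x3) x6 x2} 6 7 x1 x4) (by decide) (by decide)
    · intro i; fin_cases i; exact ⟨_, rfl⟩
    · intro i _
      apply lab_none
      unfold keyProp
      rintro (h|h|h|h|h|h|h|h|h|h|h|h|h|h|h|h|h|h|h|h|h|h|h|h|h) <;> simp_all
  · refine Or.inr ⟨by simp, [SS3], ?_, ?_, ?_⟩
    · exact infOf (@Inf.eqL {A2s} {Fm.add1 (.s x3) x4 x6} 6 7 x2 x5) (by decide) (by decide)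
    · intro i; fin_cases i; exact ⟨_, rfl⟩
    · intro i _
      apply lab_none
      unfold keyProp
      rintro (h|h|h|h|h|h|h|h|h|h|h|h|h|h|h|h|h|h|h|h|h|h|h|h|h) <;> simp_all
  · refine Or.inr ⟨by simp, [SCL, SCR], ?_, ?_, ?_⟩
    · exact infOf (@Inf.cut {A2s} {Fm.add1 (.s x3) x4 x5} (Fm.add1 x3 (.s x4) x5)) (by decide) (by decide)
    · intro i; fin_cases i
      · exact ⟨_, rfl⟩
      · exact ⟨_, rfl⟩
    · intro i _
      apply lab_none
      unfold keyProp
      rintro (h|h|h|h|h|h|h|h|h|h|h|h|h|h|h|h|h|h|h|h|h|h|h|h|h) <;> simp_all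
  · refine Or.inr ⟨by simp, [SCL1], ?_, ?_, ?_⟩
    · exact infOf (Inf.weak (Γ := {A2s}) (Δ := {Fm.add1 x3 (.s x4) x5, Fm.add1 (.s x3) x4 x5}) (Γ' := {A2s}) (Δ' := {Fm.add1 x3 (.s x4) x5}) (by decide) (by decide)) (by decide) (by decide)
    · intro i; fin_cases i; exact ⟨_, rfl⟩
    · intro i _
      apply lab_none
      unfold keyProp
      rintro (h|h|h|h|h|h|h|h|h|h|h|h|h|h|h|h|h|h|h|h|h|h|h|h|h) <;> simp_all
  · refine Or.inr ⟨by simp, [goalSeq], ?_, ?_, ?_⟩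
    · exact infOf (@Inf.subst {Fm.add2 x0 x1 x2} {Fm.add1 x0 x1 x2} θM) (by decide) (by decide)
    · intro i; fin_cases i; exact ⟨_, rfl⟩
    · intro i _
      apply lab_none
      unfold keyProp
      rintro (h|h|h|h|h|h|h|h|h|h|h|h|h|h|h|h|h|h|h|h|h|h|h|h|h) <;> simp_all
  · refine Or.inl ⟨rfl, ?_⟩
    intro i
    apply lab_none
    unfold keyProp
    rintro (h|h|h|h|h|h|h|h|h|h|h|h|h|h|h|h|h|h|h|h|h|h|h|h|h) <;> simp_all
  · refine Or.inr ⟨by simp, [SL], ?_, ?_, ?_⟩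
    · exact infOf (Inf.weak (Γ := {Fm.add1 x3 (.s x4) x5, A2s}) (Δ := {Fm.add1 (.s x3) x4 x5}) (Γ' := {Fm.add1 x3 (.s x4) x5}) (Δ' := {Fm.add1 (.s x3) x4 x5}) (by decide) (by decide)) (by decide) (by decide)
    · intro i; fin_cases i; exact ⟨_, rfl⟩
    · intro i _
      apply lab_none
      unfold keyProp
      rintro (h|h|h|h|h|h|h|h|h|h|h|h|h|h|h|h|h|h|h|h|h|h|h|h|h) <;> simp_all
  · refine Or.inr ⟨by simp, [SP0, SP1], ?_, ?_, ?_⟩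
    · refine infOf (@Inf.caseAdd1 ∅ {Fm.add1 (.s x3) x4 x5} x3 (.s x4) x5 0 1 2 (by decide) (by decide)
        (by decide) ?_) (by decide) (by decide)
      intro ψ hψ
      fin_cases hψ <;> refine ⟨?_, ?_, ?_⟩ <;> simp [Fm.fv, Tm.fv]
    · intro i; fin_cases i
      · exact ⟨_, rfl⟩
      · exact ⟨_, rfl⟩
    · intro i _
      apply lab_none
      unfold keyProp
      rintro (h|h|h|h|h|h|h|h|h|h|h|h|h|h|h|h|h|h|h|h|h|h|h|h|h) <;> simp_all
  · refine Or.inr ⟨by simp, [SQ1], ?_, ?_, ?_⟩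
    · exact infOf (@Inf.eqL {Fm.eq (.s x4) x1, Fm.eq x5 x1} {Fm.add1 (.s x6) x4 x5} 6 7 x3 .zero) (by decide) (by decide)
    · intro i; fin_cases i; exact ⟨_, rfl⟩
    · intro i _
      apply lab_none
      unfold keyProp
      rintro (h|h|h|h|h|h|h|h|h|h|h|h|h|h|h|h|h|h|h|h|h|h|h|h|h) <;> simp_all
  · refine Or.inr ⟨by simp, [SQ2], ?_, ?_, ?_⟩
    · exact infOf (@Inf.eqL {Fm.eq (.s x4) x1} {Fm.add1 (.s .zero) x4 x6} 6 7 x5 x1) (by decide) (by decide)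
    · intro i; fin_cases i; exact ⟨_, rfl⟩
    · intro i _
      apply lab_none
      unfold keyProp
      rintro (h|h|h|h|h|h|h|h|h|h|h|h|h|h|h|h|h|h|h|h|h|h|h|h|h) <;> simp_all
  · refine Or.inr ⟨by simp, [SQ3], ?_, ?_, ?_⟩
    · exact infOf (@Inf.eqL ∅ {Fm.add1 (.s .zero) x4 x7} 6 7 (.s x4) x1) (by decide) (by decide)
    · intro i; fin_cases i; exact ⟨_, rfl⟩
    · intro i _
      apply lab_none
      unfold keyProp
      rintro (h|h|h|h|h|h|h|h|h|h|h|h|h|h|h|h|h|h|h|h|h|h|h|h|h) <;> simp_all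
  · refine Or.inr ⟨by simp, [SQ4], ?_, ?_, ?_⟩
    · exact infOf (@Inf.add1R2 ∅ ∅ .zero x4 x4) (by decide) (by decide)
    · intro i; fin_cases i; exact ⟨_, rfl⟩
    · intro i _
      apply lab_none
      unfold keyProp
      rintro (h|h|h|h|h|h|h|h|h|h|h|h|h|h|h|h|h|h|h|h|h|h|h|h|h) <;> simp_all
  · refine Or.inr ⟨by simp, [], ?_, ?_, ?_⟩
    · exact infOf (@Inf.add1R1 ∅ ∅ x4) (by decide) (by decide)
    · intro i; exact absurd i.2 (by simp)
    · intro i _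
      apply lab_none
      unfold keyProp
      rintro (h|h|h|h|h|h|h|h|h|h|h|h|h|h|h|h|h|h|h|h|h|h|h|h|h) <;> simp_all
  · refine Or.inr ⟨by simp, [SR1], ?_, ?_, ?_⟩
    · exact infOf (@Inf.eqL {Fm.eq (.s x4) x1, Fm.eq x5 (.s x2), Fm.add1 x0 x1 x2} {Fm.add1 (.s x6) x4 x5} 6 7 x3 (.s x0)) (by decide) (by decide)
    · intro i; fin_cases i; exact ⟨_, rfl⟩
    · intro i _
      apply lab_none
      unfold keyProp
      rintro (h|h|h|h|h|h|h|h|h|h|h|h|h|h|h|h|h|h|h|h|h|h|h|h|h) <;> simp_all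
  · refine Or.inr ⟨by simp, [SR2], ?_, ?_, ?_⟩
    · exact infOf (@Inf.eqL {Fm.eq (.s x4) x1, Fm.add1 x0 x1 x2} {Fm.add1 (.s (.s x0)) x4 x6} 6 7 x5 (.s x2)) (by decide) (by decide)
    · intro i; fin_cases i; exact ⟨_, rfl⟩
    · intro i _
      apply lab_none
      unfold keyProp
      rintro (h|h|h|h|h|h|h|h|h|h|h|h|h|h|h|h|h|h|h|h|h|h|h|h|h) <;> simp_all
  · refine Or.inr ⟨by simp, [SR3], ?_, ?_, ?_⟩
    · exact infOf (@Inf.eqL {Fm.add1 x0 x7 x2} {Fm.add1 (.s (.s x0)) x4 (.s x2)} 6 7 (.s x4) x1) (by decide) (by decide)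
    · intro i; fin_cases i; exact ⟨_, rfl⟩
    · intro i _
      apply lab_none
      unfold keyProp
      rintro (h|h|h|h|h|h|h|h|h|h|h|h|h|h|h|h|h|h|h|h|h|h|h|h|h) <;> simp_all
  · refine Or.inr ⟨by simp, [SR4], ?_, ?_, ?_⟩
    · exact infOf (@Inf.add1R2 {Fm.add1 x0 (.s x4) x2} ∅ (.s x0) x4 x2) (by decide) (by decide)
    · intro i; fin_cases i; exact ⟨_, rfl⟩
    · intro i _
      apply lab_none
      unfold keyProp
      rintro (h|h|h|h|h|h|h|h|h|h|h|h|h|h|h|h|h|h|h|h|h|h|h|h|h) <;> simp_all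
  · refine Or.inr ⟨by simp, [SL], ?_, ?_, ?_⟩
    · exact infOf (@Inf.subst {Fm.add1 x3 (.s x4) x5} {Fm.add1 (.s x3) x4 x5} θL) (by decide) (by decide)
    · intro i; fin_cases i; exact ⟨_, rfl⟩
    · intro i _
      apply lab_none
      unfold keyProp
      rintro (h|h|h|h|h|h|h|h|h|h|h|h|h|h|h|h|h|h|h|h|h|h|h|h|h) <;> simp_all
  · refine Or.inl ⟨rfl, ?_⟩
    intro i
    apply lab_none
    unfold keyProp
    rintro (h|h|h|h|h|h|h|h|h|h|h|h|h|h|h|h|h|h|h|h|h|h|h|h|h) <;> simp_all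

end BT

namespace BT

/-- The finite cyclic derivation tree. -/
def D : DTree where
  label := lab
  root_def := fun h => Option.some_ne_none _ h
  prefix_closed := fun σ τ h => lab_pc τ σ h
  wf := wfLab

def bud1 : List ℕ := [1,0,0,0,0,0,0]
def bud2 : List ℕ := [1,0,0,0,1,0,1,0,0,0,0,0]
def lam0 : List ℕ := [1,0,0,0,1,0]

lemma bud_inv {σ : List ℕ} {S : Seq} (h : lab σ = some (S, Rule.bud)) :
    (σ = bud1 ∧ S = goalSeq) ∨ (σ = bud2 ∧ S = SL) := by
  have hk : keyProp σ := dom_inv (by rw [h]; exact fun hc => Option.some_ne_none _ hc)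
  unfold keyProp at hk
  rcases hk with hk|hk|hk|hk|hk|hk|hk|hk|hk|hk|hk|hk|hk|hk|hk|hk|hk|hk|hk|hk|hk|hk|hk|hk|hk <;>
    subst hk <;> injection h with h1 <;> injection h1 with hS hr <;>
    first
      | exact Or.inl ⟨rfl, hS.symm⟩
      | exact Or.inr ⟨rfl, hS.symm⟩
      | skip
  all_goals exact absurd hr (by simp)

def C : List ℕ → List ℕ := fun σ => if σ = bud1 then [] else lam0

lemma comp0 : ∀ σ S, lab σ = some (S, Rule.bud) → innerWith lab (C σ) S := by
  intro σ S h
  rcases bud_inv h with ⟨rfl, rfl⟩ | ⟨rfl, rfl⟩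
  · exact ⟨Rule.caseAdd2 x0 x1 x2 3 4 5, rfl, by simp⟩
  · exact ⟨Rule.caseAdd1 x3 (.s x4) x5 0 1 2, rfl, by simp⟩

lemma finDom : {σ : List ℕ | lab σ ≠ none}.Finite := by
  apply Set.Finite.subset (List.finite_toSet
    [[], [0], [0,0], [0,0,0], [0,0,0,0],
     [1], [1,0], [1,0,0], [1,0,0,0], [1,0,0,0,0],
     [1,0,0,0,0,0], [1,0,0,0,0,0,0], [1,0,0,0,1], [1,0,0,0,1,0],
     [1,0,0,0,1,0,0], [1,0,0,0,1,0,0,0], [1,0,0,0,1,0,0,0,0],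
     [1,0,0,0,1,0,0,0,0,0], [1,0,0,0,1,0,0,0,0,0,0],
     [1,0,0,0,1,0,1], [1,0,0,0,1,0,1,0], [1,0,0,0,1,0,1,0,0],
     [1,0,0,0,1,0,1,0,0,0], [1,0,0,0,1,0,1,0,0,0,0], [1,0,0,0,1,0,1,0,0,0,0,0]])
  intro σ h
  have hk := dom_inv h
  unfold keyProp at hk
  simpa using hk

/-- The cyclic pre-proof. -/
def P : PreProof where
  D := BT.D
  fin := finDom
  C := C
  comp := comp0

def stepF (st : List ℕ) (n : ℕ) : List ℕ :=
  if st ++ [n] = bud1 then [] else if st ++ [n] = bud2 then lam0 else st ++ [n]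

def run : List ℕ → List ℕ → List ℕ
  | st, [] => st
  | st, n :: l => run (stepF st n) l

/-- The tree-unfolding of `P`. -/
def T : Lbl := fun σ => lab (run [] σ)

lemma run_append (a : List ℕ) : ∀ (st b : List ℕ), run st (a ++ b) = run (run st a) b := by
  induction a with
  | nil => intro st b; rfl
  | cons n a ih => intro st b; exact ih (stepF st n) b

lemma runId : ∀ (σ : List ℕ), (∀ π, π <+: σ → π ≠ bud1 ∧ π ≠ bud2) → run [] σ = σ := by
  intro σ
  induction σ using List.reverseRecOn with
  | nil => intro _; rfl
  | append_singleton τ n ih =>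
    intro h
    rw [run_append, ih (fun π hπ => h π (hπ.trans (List.prefix_append τ [n])))]
    show stepF τ n = τ ++ [n]
    have h2 := h (τ ++ [n]) List.prefix_rfl
    simp [stepF, h2.1, h2.2]

lemma unf : IsUnfolding P T := by
  refine ⟨?_, ?_, ?_⟩
  · intro σ h hb
    have hk := dom_inv h
    unfold keyProp at hk
    rcases hk with hk|hk|hk|hk|hk|hk|hk|hk|hk|hk|hk|hk|hk|hk|hk|hk|hk|hk|hk|hk|hk|hk|hk|hk|hk <;>
      subst hk <;> first | rfl | skip
    · exact absurd ⟨goalSeq, rfl⟩ hb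
    · exact absurd ⟨SL, rfl⟩ hb
  · intro σ₁ σ₂ hb
    obtain ⟨S, hS⟩ := hb
    rcases bud_inv hS with ⟨rfl, -⟩ | ⟨rfl, -⟩
    · show lab (run [] (bud1 ++ σ₂)) = lab (run [] (C bud1 ++ σ₂))
      rw [run_append, show C bud1 = [] from rfl]
      rfl
    · show lab (run [] (bud2 ++ σ₂)) = lab (run [] (C bud2 ++ σ₂))
      rw [run_append, show C bud2 = lam0 from rfl, show run [] bud2 = lam0 from rfl]
      show lab (run lam0 σ₂) = lab (run [] (lam0 ++ σ₂))
      rw [run_append]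
      rfl
  · intro σ h hpre
    show lab (run [] σ) = none
    have hside : ∀ π, π <+: σ → π ≠ bud1 ∧ π ≠ bud2 := by
      intro π hπ
      refine ⟨?_, ?_⟩
      · rintro rfl; exact hpre bud1 hπ ⟨goalSeq, rfl⟩
      · rintro rfl; exact hpre bud2 hπ ⟨SL, rfl⟩
    rw [runId σ hside]
    exact h

end BT

namespace BT

def dd (p : ℕ → List ℕ) : ℕ → List ℕ := fun i => run [] (p i)

lemma stepF_ne (st : List ℕ) (n : ℕ) : stepF st n ≠ bud1 ∧ stepF st n ≠ bud2 := by
  unfold stepF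
  split_ifs with a b
  · exact ⟨by simp [bud1], by simp [bud2]⟩
  · exact ⟨by simp [lam0, bud1], by simp [lam0, bud2]⟩
  · exact ⟨a, b⟩

lemma run_ne_bud : ∀ (l st : List ℕ), st ≠ bud1 → st ≠ bud2 → run st l ≠ bud1 ∧ run st l ≠ bud2 := by
  intro l
  induction l with
  | nil => intro st h1 h2; exact ⟨h1, h2⟩
  | cons n l ih => intro st _ _; exact ih (stepF st n) (stepF_ne st n).1 (stepF_ne st n).2

variable {p : ℕ → List ℕ} {nn : ℕ → ℕ}


lemma noD4 (hlab : ∀ i, lab (dd p i) ≠ none)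
    (hds : ∀ i, dd p (i+1) = stepF (dd p i) (nn i)) :
    ∀ i, dd p i ≠ [0,0,0,0] := by
  intro i hK
  have he : stepF [0,0,0,0] (nn i) = [0,0,0,0] ++ [nn i] := by simp [stepF, bud1, bud2]
  have h := hlab (i+1)
  rw [hds i, hK, he] at h
  have hk := dom_inv h
  unfold keyProp at hk
  rcases hk with h|h|h|h|h|h|h|h|h|h|h|h|h|h|h|h|h|h|h|h|h|h|h|h|h <;> simp_all

lemma noD3 (hlab : ∀ i, lab (dd p i) ≠ none)
    (hds : ∀ i, dd p (i+1) = stepF (dd p i) (nn i)) :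
    ∀ i, dd p i ≠ [0,0,0] := by
  intro i hK
  have he : stepF [0,0,0] (nn i) = [0,0,0] ++ [nn i] := by simp [stepF, bud1, bud2]
  have h := hlab (i+1)
  rw [hds i, hK, he] at h
  have hk := dom_inv h
  unfold keyProp at hk
  have hm : nn i = 0 := by rcases hk with h|h|h|h|h|h|h|h|h|h|h|h|h|h|h|h|h|h|h|h|h|h|h|h|h <;> simp_all
  have hc : dd p (i+1) = [0,0,0,0] := by rw [hds i, hK, he, hm] <;> try rfl
  exact noD4 hlab hds (i+1) hc

lemma noD2 (hlab : ∀ i, lab (dd p i) ≠ none)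
    (hds : ∀ i, dd p (i+1) = stepF (dd p i) (nn i)) :
    ∀ i, dd p i ≠ [0,0] := by
  intro i hK
  have he : stepF [0,0] (nn i) = [0,0] ++ [nn i] := by simp [stepF, bud1, bud2]
  have h := hlab (i+1)
  rw [hds i, hK, he] at h
  have hk := dom_inv h
  unfold keyProp at hk
  have hm : nn i = 0 := by rcases hk with h|h|h|h|h|h|h|h|h|h|h|h|h|h|h|h|h|h|h|h|h|h|h|h|h <;> simp_all
  have hc : dd p (i+1) = [0,0,0] := by rw [hds i, hK, he, hm] <;> try rfl
  exact noD3 hlab hds (i+1) hc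

lemma noD1 (hlab : ∀ i, lab (dd p i) ≠ none)
    (hds : ∀ i, dd p (i+1) = stepF (dd p i) (nn i)) :
    ∀ i, dd p i ≠ [0] := by
  intro i hK
  have he : stepF [0] (nn i) = [0] ++ [nn i] := by simp [stepF, bud1, bud2]
  have h := hlab (i+1)
  rw [hds i, hK, he] at h
  have hk := dom_inv h
  unfold keyProp at hk
  have hm : nn i = 0 := by rcases hk with h|h|h|h|h|h|h|h|h|h|h|h|h|h|h|h|h|h|h|h|h|h|h|h|h <;> simp_all
  have hc : dd p (i+1) = [0,0] := by rw [hds i, hK, he, hm] <;> try rfl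
  exact noD2 hlab hds (i+1) hc

lemma noE5 (hlab : ∀ i, lab (dd p i) ≠ none)
    (hds : ∀ i, dd p (i+1) = stepF (dd p i) (nn i)) :
    ∀ i, dd p i ≠ [1,0,0,0,1,0,0,0,0,0,0] := by
  intro i hK
  have he : stepF [1,0,0,0,1,0,0,0,0,0,0] (nn i) = [1,0,0,0,1,0,0,0,0,0,0] ++ [nn i] := by
    simp [stepF, bud1, bud2]
  have h := hlab (i+1)
  rw [hds i, hK, he] at h
  have hk := dom_inv h
  unfold keyProp at hk
  rcases hk with h|h|h|h|h|h|h|h|h|h|h|h|h|h|h|h|h|h|h|h|h|h|h|h|h <;> simp_all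

lemma noE4 (hlab : ∀ i, lab (dd p i) ≠ none)
    (hds : ∀ i, dd p (i+1) = stepF (dd p i) (nn i)) :
    ∀ i, dd p i ≠ [1,0,0,0,1,0,0,0,0,0] := by
  intro i hK
  have he : stepF [1,0,0,0,1,0,0,0,0,0] (nn i) = [1,0,0,0,1,0,0,0,0,0] ++ [nn i] := by simp [stepF, bud1, bud2]
  have h := hlab (i+1)
  rw [hds i, hK, he] at h
  have hk := dom_inv h
  unfold keyProp at hk
  have hm : nn i = 0 := by rcases hk with h|h|h|h|h|h|h|h|h|h|h|h|h|h|h|h|h|h|h|h|h|h|h|h|h <;> simp_all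
  have hc : dd p (i+1) = [1,0,0,0,1,0,0,0,0,0,0] := by rw [hds i, hK, he, hm] <;> try rfl
  exact noE5 hlab hds (i+1) hc

lemma noE3 (hlab : ∀ i, lab (dd p i) ≠ none)
    (hds : ∀ i, dd p (i+1) = stepF (dd p i) (nn i)) :
    ∀ i, dd p i ≠ [1,0,0,0,1,0,0,0,0] := by
  intro i hK
  have he : stepF [1,0,0,0,1,0,0,0,0] (nn i) = [1,0,0,0,1,0,0,0,0] ++ [nn i] := by simp [stepF, bud1, bud2]
  have h := hlab (i+1)
  rw [hds i, hK, he] at h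
  have hk := dom_inv h
  unfold keyProp at hk
  have hm : nn i = 0 := by rcases hk with h|h|h|h|h|h|h|h|h|h|h|h|h|h|h|h|h|h|h|h|h|h|h|h|h <;> simp_all
  have hc : dd p (i+1) = [1,0,0,0,1,0,0,0,0,0] := by rw [hds i, hK, he, hm] <;> try rfl
  exact noE4 hlab hds (i+1) hc

lemma noE2 (hlab : ∀ i, lab (dd p i) ≠ none)
    (hds : ∀ i, dd p (i+1) = stepF (dd p i) (nn i)) :
    ∀ i, dd p i ≠ [1,0,0,0,1,0,0,0] := by
  intro i hK
  have he : stepF [1,0,0,0,1,0,0,0] (nn i) = [1,0,0,0,1,0,0,0] ++ [nn i] := by simp [stepF, bud1, bud2]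
  have h := hlab (i+1)
  rw [hds i, hK, he] at h
  have hk := dom_inv h
  unfold keyProp at hk
  have hm : nn i = 0 := by rcases hk with h|h|h|h|h|h|h|h|h|h|h|h|h|h|h|h|h|h|h|h|h|h|h|h|h <;> simp_all
  have hc : dd p (i+1) = [1,0,0,0,1,0,0,0,0] := by rw [hds i, hK, he, hm] <;> try rfl
  exact noE3 hlab hds (i+1) hc

lemma noE1 (hlab : ∀ i, lab (dd p i) ≠ none)
    (hds : ∀ i, dd p (i+1) = stepF (dd p i) (nn i)) :
    ∀ i, dd p i ≠ [1,0,0,0,1,0,0] := by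
  intro i hK
  have he : stepF [1,0,0,0,1,0,0] (nn i) = [1,0,0,0,1,0,0] ++ [nn i] := by simp [stepF, bud1, bud2]
  have h := hlab (i+1)
  rw [hds i, hK, he] at h
  have hk := dom_inv h
  unfold keyProp at hk
  have hm : nn i = 0 := by rcases hk with h|h|h|h|h|h|h|h|h|h|h|h|h|h|h|h|h|h|h|h|h|h|h|h|h <;> simp_all
  have hc : dd p (i+1) = [1,0,0,0,1,0,0,0] := by rw [hds i, hK, he, hm] <;> try rfl
  exact noE2 hlab hds (i+1) hc

lemma fr1 (hlab : ∀ i, lab (dd p i) ≠ none)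
    (hds : ∀ i, dd p (i+1) = stepF (dd p i) (nn i)) (i : ℕ)
    (hK : dd p i = [1]) : dd p (i+1) = [1,0] := by
  have he : stepF [1] (nn i) = [1] ++ [nn i] := by simp [stepF, bud1, bud2]
  have h := hlab (i+1)
  rw [hds i, hK, he] at h
  have hk := dom_inv h
  unfold keyProp at hk
  have hm : nn i = 0 := by rcases hk with h|h|h|h|h|h|h|h|h|h|h|h|h|h|h|h|h|h|h|h|h|h|h|h|h <;> simp_all
  rw [hds i, hK, he, hm]
  try rfl

lemma fr2 (hlab : ∀ i, lab (dd p i) ≠ none)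
    (hds : ∀ i, dd p (i+1) = stepF (dd p i) (nn i)) (i : ℕ)
    (hK : dd p i = [1,0]) : dd p (i+1) = [1,0,0] := by
  have he : stepF [1,0] (nn i) = [1,0] ++ [nn i] := by simp [stepF, bud1, bud2]
  have h := hlab (i+1)
  rw [hds i, hK, he] at h
  have hk := dom_inv h
  unfold keyProp at hk
  have hm : nn i = 0 := by rcases hk with h|h|h|h|h|h|h|h|h|h|h|h|h|h|h|h|h|h|h|h|h|h|h|h|h <;> simp_all
  rw [hds i, hK, he, hm]
  try rfl

lemma fr3 (hlab : ∀ i, lab (dd p i) ≠ none)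
    (hds : ∀ i, dd p (i+1) = stepF (dd p i) (nn i)) (i : ℕ)
    (hK : dd p i = [1,0,0]) : dd p (i+1) = [1,0,0,0] := by
  have he : stepF [1,0,0] (nn i) = [1,0,0] ++ [nn i] := by simp [stepF, bud1, bud2]
  have h := hlab (i+1)
  rw [hds i, hK, he] at h
  have hk := dom_inv h
  unfold keyProp at hk
  have hm : nn i = 0 := by rcases hk with h|h|h|h|h|h|h|h|h|h|h|h|h|h|h|h|h|h|h|h|h|h|h|h|h <;> simp_all
  rw [hds i, hK, he, hm]
  try rfl

lemma fr5 (hlab : ∀ i, lab (dd p i) ≠ none)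
    (hds : ∀ i, dd p (i+1) = stepF (dd p i) (nn i)) (i : ℕ)
    (hK : dd p i = [1,0,0,0,0]) : dd p (i+1) = [1,0,0,0,0,0] := by
  have he : stepF [1,0,0,0,0] (nn i) = [1,0,0,0,0] ++ [nn i] := by simp [stepF, bud1, bud2]
  have h := hlab (i+1)
  rw [hds i, hK, he] at h
  have hk := dom_inv h
  unfold keyProp at hk
  have hm : nn i = 0 := by rcases hk with h|h|h|h|h|h|h|h|h|h|h|h|h|h|h|h|h|h|h|h|h|h|h|h|h <;> simp_all
  rw [hds i, hK, he, hm]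
  try rfl

lemma fr7 (hlab : ∀ i, lab (dd p i) ≠ none)
    (hds : ∀ i, dd p (i+1) = stepF (dd p i) (nn i)) (i : ℕ)
    (hK : dd p i = [1,0,0,0,1]) : dd p (i+1) = [1,0,0,0,1,0] := by
  have he : stepF [1,0,0,0,1] (nn i) = [1,0,0,0,1] ++ [nn i] := by simp [stepF, bud1, bud2]
  have h := hlab (i+1)
  rw [hds i, hK, he] at h
  have hk := dom_inv h
  unfold keyProp at hk
  have hm : nn i = 0 := by rcases hk with h|h|h|h|h|h|h|h|h|h|h|h|h|h|h|h|h|h|h|h|h|h|h|h|h <;> simp_all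
  rw [hds i, hK, he, hm]
  try rfl

lemma fr9 (hlab : ∀ i, lab (dd p i) ≠ none)
    (hds : ∀ i, dd p (i+1) = stepF (dd p i) (nn i)) (i : ℕ)
    (hK : dd p i = [1,0,0,0,1,0,1]) : dd p (i+1) = [1,0,0,0,1,0,1,0] := by
  have he : stepF [1,0,0,0,1,0,1] (nn i) = [1,0,0,0,1,0,1] ++ [nn i] := by simp [stepF, bud1, bud2]
  have h := hlab (i+1)
  rw [hds i, hK, he] at h
  have hk := dom_inv h
  unfold keyProp at hk
  have hm : nn i = 0 := by rcases hk with h|h|h|h|h|h|h|h|h|h|h|h|h|h|h|h|h|h|h|h|h|h|h|h|h <;> simp_all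
  rw [hds i, hK, he, hm]
  try rfl

lemma fr10 (hlab : ∀ i, lab (dd p i) ≠ none)
    (hds : ∀ i, dd p (i+1) = stepF (dd p i) (nn i)) (i : ℕ)
    (hK : dd p i = [1,0,0,0,1,0,1,0]) : dd p (i+1) = [1,0,0,0,1,0,1,0,0] := by
  have he : stepF [1,0,0,0,1,0,1,0] (nn i) = [1,0,0,0,1,0,1,0] ++ [nn i] := by simp [stepF, bud1, bud2]
  have h := hlab (i+1)
  rw [hds i, hK, he] at h
  have hk := dom_inv h
  unfold keyProp at hk
  have hm : nn i = 0 := by rcases hk with h|h|h|h|h|h|h|h|h|h|h|h|h|h|h|h|h|h|h|h|h|h|h|h|h <;> simp_all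
  rw [hds i, hK, he, hm]
  try rfl

lemma fr11 (hlab : ∀ i, lab (dd p i) ≠ none)
    (hds : ∀ i, dd p (i+1) = stepF (dd p i) (nn i)) (i : ℕ)
    (hK : dd p i = [1,0,0,0,1,0,1,0,0]) : dd p (i+1) = [1,0,0,0,1,0,1,0,0,0] := by
  have he : stepF [1,0,0,0,1,0,1,0,0] (nn i) = [1,0,0,0,1,0,1,0,0] ++ [nn i] := by simp [stepF, bud1, bud2]
  have h := hlab (i+1)
  rw [hds i, hK, he] at h
  have hk := dom_inv h
  unfold keyProp at hk
  have hm : nn i = 0 := by rcases hk with h|h|h|h|h|h|h|h|h|h|h|h|h|h|h|h|h|h|h|h|h|h|h|h|h <;> simp_all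
  rw [hds i, hK, he, hm]
  try rfl

lemma fr12 (hlab : ∀ i, lab (dd p i) ≠ none)
    (hds : ∀ i, dd p (i+1) = stepF (dd p i) (nn i)) (i : ℕ)
    (hK : dd p i = [1,0,0,0,1,0,1,0,0,0]) : dd p (i+1) = [1,0,0,0,1,0,1,0,0,0,0] := by
  have he : stepF [1,0,0,0,1,0,1,0,0,0] (nn i) = [1,0,0,0,1,0,1,0,0,0] ++ [nn i] := by simp [stepF, bud1, bud2]
  have h := hlab (i+1)
  rw [hds i, hK, he] at h
  have hk := dom_inv h
  unfold keyProp at hk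
  have hm : nn i = 0 := by rcases hk with h|h|h|h|h|h|h|h|h|h|h|h|h|h|h|h|h|h|h|h|h|h|h|h|h <;> simp_all
  rw [hds i, hK, he, hm]
  try rfl

lemma fr0 (hlab : ∀ i, lab (dd p i) ≠ none)
    (hds : ∀ i, dd p (i+1) = stepF (dd p i) (nn i)) (i : ℕ)
    (hK : dd p i = []) : dd p (i+1) = [1] ∧ nn i = 1 := by
  have he : stepF [] (nn i) = [nn i] := by simp [stepF, bud1, bud2]
  have h := hlab (i+1)
  rw [hds i, hK, he] at h
  have hk := dom_inv h
  unfold keyProp at hk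
  have hm : nn i = 0 ∨ nn i = 1 := by rcases hk with h|h|h|h|h|h|h|h|h|h|h|h|h|h|h|h|h|h|h|h|h|h|h|h|h <;> simp_all
  rcases hm with hm | hm
  · exact absurd (by rw [hds i, hK, he, hm] <;> try rfl) (noD1 hlab hds (i+1))
  · exact ⟨by rw [hds i, hK, he, hm] <;> try rfl, hm⟩

lemma fr4 (hlab : ∀ i, lab (dd p i) ≠ none)
    (hds : ∀ i, dd p (i+1) = stepF (dd p i) (nn i)) (i : ℕ)
    (hK : dd p i = [1,0,0,0]) : dd p (i+1) = [1,0,0,0,0] ∨ dd p (i+1) = [1,0,0,0,1] := by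
  have he : stepF [1,0,0,0] (nn i) = [1,0,0,0] ++ [nn i] := by simp [stepF, bud1, bud2]
  have h := hlab (i+1)
  rw [hds i, hK, he] at h
  have hk := dom_inv h
  unfold keyProp at hk
  have hm : nn i = 0 ∨ nn i = 1 := by rcases hk with h|h|h|h|h|h|h|h|h|h|h|h|h|h|h|h|h|h|h|h|h|h|h|h|h <;> simp_all
  rcases hm with hm | hm
  · exact Or.inl (by rw [hds i, hK, he, hm] <;> try rfl)
  · exact Or.inr (by rw [hds i, hK, he, hm] <;> try rfl)

lemma fr8 (hlab : ∀ i, lab (dd p i) ≠ none)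
    (hds : ∀ i, dd p (i+1) = stepF (dd p i) (nn i)) (i : ℕ)
    (hK : dd p i = [1,0,0,0,1,0]) : dd p (i+1) = [1,0,0,0,1,0,1] ∧ nn i = 1 := by
  have he : stepF [1,0,0,0,1,0] (nn i) = [1,0,0,0,1,0] ++ [nn i] := by simp [stepF, bud1, bud2]
  have h := hlab (i+1)
  rw [hds i, hK, he] at h
  have hk := dom_inv h
  unfold keyProp at hk
  have hm : nn i = 0 ∨ nn i = 1 := by rcases hk with h|h|h|h|h|h|h|h|h|h|h|h|h|h|h|h|h|h|h|h|h|h|h|h|h <;> simp_all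
  rcases hm with hm | hm
  · exact absurd (by rw [hds i, hK, he, hm] <;> try rfl) (noE1 hlab hds (i+1))
  · exact ⟨by rw [hds i, hK, he, hm] <;> try rfl, hm⟩

lemma fr6 (hlab : ∀ i, lab (dd p i) ≠ none)
    (hds : ∀ i, dd p (i+1) = stepF (dd p i) (nn i)) (i : ℕ)
    (hK : dd p i = [1,0,0,0,0,0]) : dd p (i+1) = [] := by
  by_cases hm : nn i = 0
  · rw [hds i, hK, hm]; rfl
  · exfalso
    have he : stepF [1,0,0,0,0,0] (nn i) = [1,0,0,0,0,0] ++ [nn i] := by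
      simp [stepF, bud1, bud2, hm]
    have h := hlab (i+1)
    rw [hds i, hK, he] at h
    have hk := dom_inv h
    unfold keyProp at hk
    rcases hk with h|h|h|h|h|h|h|h|h|h|h|h|h|h|h|h|h|h|h|h|h|h|h|h|h <;> simp_all

lemma fr13 (hlab : ∀ i, lab (dd p i) ≠ none)
    (hds : ∀ i, dd p (i+1) = stepF (dd p i) (nn i)) (i : ℕ)
    (hK : dd p i = [1,0,0,0,1,0,1,0,0,0,0]) : dd p (i+1) = [1,0,0,0,1,0] := by
  by_cases hm : nn i = 0
  · rw [hds i, hK, hm]; rfl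
  · exfalso
    have he : stepF [1,0,0,0,1,0,1,0,0,0,0] (nn i) = [1,0,0,0,1,0,1,0,0,0,0] ++ [nn i] := by
      simp [stepF, bud1, bud2, hm]
    have h := hlab (i+1)
    rw [hds i, hK, he] at h
    have hk := dom_inv h
    unfold keyProp at hk
    rcases hk with h|h|h|h|h|h|h|h|h|h|h|h|h|h|h|h|h|h|h|h|h|h|h|h|h <;> simp_all

end BT

namespace BT

def trA2 : List ℕ → Fm := fun σ => if σ = ([] : List ℕ) then .add2 x0 x1 x2 else A2s

def trL : List ℕ → Fm := fun σ =>
  if σ = [1,0,0,0,1,0] then .add1 x3 (.s x4) x5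
  else if σ = [1,0,0,0,1,0,1,0,0,0] then .add1 x0 (.s x4) x2
  else if σ = [1,0,0,0,1,0,1,0,0,0,0] then .add1 x0 (.s x4) x2
  else .add1 x0 x1 x2

def MC (σ : List ℕ) : Prop :=
  σ = [] ∨ σ = [1] ∨ σ = [1,0] ∨ σ = [1,0,0] ∨ σ = [1,0,0,0] ∨
  σ = [1,0,0,0,0] ∨ σ = [1,0,0,0,0,0]

def LC (σ : List ℕ) : Prop :=
  σ = [1,0,0,0,1,0] ∨ σ = [1,0,0,0,1,0,1] ∨ σ = [1,0,0,0,1,0,1,0] ∨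
  σ = [1,0,0,0,1,0,1,0,0] ∨ σ = [1,0,0,0,1,0,1,0,0,0] ∨ σ = [1,0,0,0,1,0,1,0,0,0,0]

lemma gtc : GTC T := by
  intro p hp
  obtain ⟨hdef, hstep⟩ := hp
  choose nn hn using hstep
  have hlab : ∀ i, lab (dd p i) ≠ none := fun i => hdef i
  have hds : ∀ i, dd p (i+1) = stepF (dd p i) (nn i) := by
    intro i
    show run [] (p (i+1)) = _
    rw [hn i, run_append]
    rfl
  have hT : ∀ i, T (p i) = lab (dd p i) := fun _ => rfl
  by_cases hM : ∀ i, MC (dd p i)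
  · -- Case A : the path stays on the main cycle forever
    have notconn : ∀ i, dd p i ≠ [1,0,0,0,1] := by
      intro i hc
      have := hM i
      rw [hc] at this
      unfold MC at this
      rcases this with h|h|h|h|h|h|h <;> simp_all
    have fr4' : ∀ i, dd p i = [1,0,0,0] → dd p (i+1) = [1,0,0,0,0] := by
      intro i hK
      rcases fr4 hlab hds i hK with hc | hc
      · exact hc
      · exact absurd hc (notconn (i+1))
    refine ⟨0, fun i => trA2 (dd p i), ?_, ?_⟩
    · intro i _
      rcases hM i with hK|hK|hK|hK|hK|hK|hK
      · obtain ⟨hc, hm⟩ := fr0 hlab hds i hK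
        refine ⟨goalSeq, .caseAdd2 x0 x1 x2 3 4 5, nn i, by rw [hT i, hK]; rfl,
          by beta_reduce; rw [hK]; decide, by beta_reduce; rw [hK]; exact Or.inr ⟨x0, x1, x2, rfl⟩, hn i, ?_⟩
        beta_reduce
        rw [hK, hc, hm]
        exact Or.inr ⟨rfl, rfl, rfl⟩
      · have hc := fr1 hlab hds i hK
        refine ⟨SS0, .eqL 6 7 x0 (.s x3), nn i, by rw [hT i, hK]; rfl,
          by beta_reduce; rw [hK]; decide, by beta_reduce; rw [hK]; exact Or.inr ⟨x3, .s x4, x5, rfl⟩, hn i, ?_⟩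
        beta_reduce
        rw [hK, hc]
        exact ⟨A2s, rfl, rfl⟩
      · have hc := fr2 hlab hds i hK
        refine ⟨SS1, .eqL 6 7 x1 x4, nn i, by rw [hT i, hK]; rfl,
          by beta_reduce; rw [hK]; decide, by beta_reduce; rw [hK]; exact Or.inr ⟨x3, .s x4, x5, rfl⟩, hn i, ?_⟩
        beta_reduce
        rw [hK, hc]
        exact ⟨A2s, rfl, rfl⟩
      · have hc := fr3 hlab hds i hK
        refine ⟨SS2, .eqL 6 7 x2 x5, nn i, by rw [hT i, hK]; rfl,
          by beta_reduce; rw [hK]; decide, by beta_reduce; rw [hK]; exact Or.inr ⟨x3, .s x4, x5, rfl⟩, hn i, ?_⟩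
        beta_reduce
        rw [hK, hc]
        exact ⟨A2s, rfl, rfl⟩
      · have hc := fr4' i hK
        refine ⟨SS3, .cut (.add1 x3 (.s x4) x5), nn i, by rw [hT i, hK]; rfl,
          by beta_reduce; rw [hK]; decide, by beta_reduce; rw [hK]; exact Or.inr ⟨x3, .s x4, x5, rfl⟩, hn i, ?_⟩
        beta_reduce
        rw [hK, hc]
        rfl
      · have hc := fr5 hlab hds i hK
        refine ⟨SCL, .weak, nn i, by rw [hT i, hK]; rfl,
          by beta_reduce; rw [hK]; decide, by beta_reduce; rw [hK]; exact Or.inr ⟨x3, .s x4, x5, rfl⟩, hn i, ?_⟩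
        beta_reduce
        rw [hK, hc]
        rfl
      · have hc := fr6 hlab hds i hK
        refine ⟨SCL1, .subst θM, nn i, by rw [hT i, hK]; rfl,
          by beta_reduce; rw [hK]; decide, by beta_reduce; rw [hK]; exact Or.inr ⟨x3, .s x4, x5, rfl⟩, hn i, ?_⟩
        beta_reduce
        rw [hK, hc]
        rfl
    · have reach : ∀ i, ∃ j, i ≤ j ∧ dd p j = [] := by
        intro i
        rcases hM i with hK|hK|hK|hK|hK|hK|hK
        · exact ⟨i, le_rfl, hK⟩
        · have h1 := fr1 hlab hds i hK
          have h2 := fr2 hlab hds (i+1) h1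
          have h3 := fr3 hlab hds (i+2) h2
          have h4 := fr4' (i+3) h3
          have h5 := fr5 hlab hds (i+4) h4
          have h6 := fr6 hlab hds (i+5) h5
          exact ⟨i+6, by omega, h6⟩
        · have h2 := fr2 hlab hds i hK
          have h3 := fr3 hlab hds (i+1) h2
          have h4 := fr4' (i+2) h3
          have h5 := fr5 hlab hds (i+3) h4
          have h6 := fr6 hlab hds (i+4) h5
          exact ⟨i+5, by omega, h6⟩
        · have h3 := fr3 hlab hds i hK
          have h4 := fr4' (i+1) h3
          have h5 := fr5 hlab hds (i+2) h4
          have h6 := fr6 hlab hds (i+3) h5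
          exact ⟨i+4, by omega, h6⟩
        · have h4 := fr4' i hK
          have h5 := fr5 hlab hds (i+1) h4
          have h6 := fr6 hlab hds (i+2) h5
          exact ⟨i+3, by omega, h6⟩
        · have h5 := fr5 hlab hds i hK
          have h6 := fr6 hlab hds (i+1) h5
          exact ⟨i+2, by omega, h6⟩
        · have h6 := fr6 hlab hds i hK
          exact ⟨i+1, by omega, h6⟩
      intro n
      obtain ⟨j, hj, hK⟩ := reach n
      obtain ⟨hc, hm⟩ := fr0 hlab hds j hK
      refine ⟨j, hj, Nat.zero_le _, goalSeq, .caseAdd2 x0 x1 x2 3 4 5, nn j,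
        by rw [hT j, hK]; rfl, hn j, ?_⟩
      beta_reduce
      rw [hK, hc]
      exact ⟨rfl, hm, rfl⟩
  · -- Case B : the path eventually enters the lemma cycle
    push_neg at hM
    obtain ⟨i0, hi0⟩ := hM
    have hclass : ∀ i, MC (dd p i) ∨ dd p i = [1,0,0,0,1] ∨ LC (dd p i) := by
      intro i
      have hnb := run_ne_bud (p i) [] (by decide) (by decide)
      have hk := dom_inv (hlab i)
      unfold keyProp at hk
      rcases hk with h|h|h|h|h|h|h|h|h|h|h|h|h|h|h|h|h|h|h|h|h|h|h|h|h
      · exact Or.inl (Or.inl h)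
      · exact absurd h (noD1 hlab hds i)
      · exact absurd h (noD2 hlab hds i)
      · exact absurd h (noD3 hlab hds i)
      · exact absurd h (noD4 hlab hds i)
      · exact Or.inl (Or.inr (Or.inl h))
      · exact Or.inl (Or.inr (Or.inr (Or.inl h)))
      · exact Or.inl (Or.inr (Or.inr (Or.inr (Or.inl h))))
      · exact Or.inl (Or.inr (Or.inr (Or.inr (Or.inr (Or.inl h)))))
      · exact Or.inl (Or.inr (Or.inr (Or.inr (Or.inr (Or.inr (Or.inl h))))))
      · exact Or.inl (Or.inr (Or.inr (Or.inr (Or.inr (Or.inr (Or.inr h))))))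
      · exact absurd h hnb.1
      · exact Or.inr (Or.inl h)
      · exact Or.inr (Or.inr (Or.inl h))
      · exact absurd h (noE1 hlab hds i)
      · exact absurd h (noE2 hlab hds i)
      · exact absurd h (noE3 hlab hds i)
      · exact absurd h (noE4 hlab hds i)
      · exact absurd h (noE5 hlab hds i)
      · exact Or.inr (Or.inr (Or.inr (Or.inl h)))
      · exact Or.inr (Or.inr (Or.inr (Or.inr (Or.inl h))))
      · exact Or.inr (Or.inr (Or.inr (Or.inr (Or.inr (Or.inl h)))))
      · exact Or.inr (Or.inr (Or.inr (Or.inr (Or.inr (Or.inr (Or.inl h))))))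
      · exact Or.inr (Or.inr (Or.inr (Or.inr (Or.inr (Or.inr (Or.inr h))))))
      · exact absurd h hnb.2
    have hLstep : ∀ i, LC (dd p i) → LC (dd p (i+1)) := by
      intro i h
      rcases h with h|h|h|h|h|h
      · exact Or.inr (Or.inl (fr8 hlab hds i h).1)
      · exact Or.inr (Or.inr (Or.inl (fr9 hlab hds i h)))
      · exact Or.inr (Or.inr (Or.inr (Or.inl (fr10 hlab hds i h))))
      · exact Or.inr (Or.inr (Or.inr (Or.inr (Or.inl (fr11 hlab hds i h)))))
      · exact Or.inr (Or.inr (Or.inr (Or.inr (Or.inr (fr12 hlab hds i h)))))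
      · exact Or.inl (fr13 hlab hds i h)
    have hbase : LC (dd p (i0+1)) := by
      rcases hclass i0 with h | h | h
      · exact absurd h hi0
      · exact Or.inl (fr7 hlab hds i0 h)
      · exact hLstep i0 h
    have hLall : ∀ j, LC (dd p (i0+1+j)) := by
      intro j
      induction j with
      | zero => exact hbase
      | succ j ih => exact hLstep _ ih
    have hLge : ∀ i, i0+1 ≤ i → LC (dd p i) := by
      intro i hi
      have he : i0+1+(i-(i0+1)) = i := by omega
      rw [← he]
      exact hLall _
    refine ⟨i0+1, fun i => trL (dd p i), ?_, ?_⟩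
    · intro i hi
      rcases hLge i hi with hK|hK|hK|hK|hK|hK
      · obtain ⟨hc, hm⟩ := fr8 hlab hds i hK
        refine ⟨SL, .caseAdd1 x3 (.s x4) x5 0 1 2, nn i, by rw [hT i, hK]; rfl,
          by beta_reduce; rw [hK]; decide, by beta_reduce; rw [hK]; exact Or.inl ⟨x3, .s x4, x5, rfl⟩, hn i, ?_⟩
        beta_reduce
        rw [hK, hc, hm]
        exact Or.inr ⟨rfl, rfl, rfl⟩
      · have hc := fr9 hlab hds i hK
        refine ⟨SP1, .eqL 6 7 x3 (.s x0), nn i, by rw [hT i, hK]; rfl,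
          by beta_reduce; rw [hK]; decide, by beta_reduce; rw [hK]; exact Or.inl ⟨x0, x1, x2, rfl⟩, hn i, ?_⟩
        beta_reduce
        rw [hK, hc]
        exact ⟨.add1 x0 x1 x2, rfl, rfl⟩
      · have hc := fr10 hlab hds i hK
        refine ⟨SR1, .eqL 6 7 x5 (.s x2), nn i, by rw [hT i, hK]; rfl,
          by beta_reduce; rw [hK]; decide, by beta_reduce; rw [hK]; exact Or.inl ⟨x0, x1, x2, rfl⟩, hn i, ?_⟩
        beta_reduce
        rw [hK, hc]
        exact ⟨.add1 x0 x1 x2, rfl, rfl⟩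
      · have hc := fr11 hlab hds i hK
        refine ⟨SR2, .eqL 6 7 (.s x4) x1, nn i, by rw [hT i, hK]; rfl,
          by beta_reduce; rw [hK]; decide, by beta_reduce; rw [hK]; exact Or.inl ⟨x0, x1, x2, rfl⟩, hn i, ?_⟩
        beta_reduce
        rw [hK, hc]
        exact ⟨.add1 x0 x7 x2, rfl, rfl⟩
      · have hc := fr12 hlab hds i hK
        refine ⟨SR3, .add1R2 (.s x0) x4 x2, nn i, by rw [hT i, hK]; rfl,
          by beta_reduce; rw [hK]; decide, by beta_reduce; rw [hK]; exact Or.inl ⟨x0, .s x4, x2, rfl⟩, hn i, ?_⟩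
        beta_reduce
        rw [hK, hc]
        rfl
      · have hc := fr13 hlab hds i hK
        refine ⟨SR4, .subst θL, nn i, by rw [hT i, hK]; rfl,
          by beta_reduce; rw [hK]; decide, by beta_reduce; rw [hK]; exact Or.inl ⟨x0, .s x4, x2, rfl⟩, hn i, ?_⟩
        beta_reduce
        rw [hK, hc]
        rfl
    · have reach : ∀ i, i0+1 ≤ i → ∃ j, i ≤ j ∧ dd p j = [1,0,0,0,1,0] := by
        intro i hi
        rcases hLge i hi with hK|hK|hK|hK|hK|hK
        · exact ⟨i, le_rfl, hK⟩
        · have h1 := fr9 hlab hds i hK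
          have h2 := fr10 hlab hds (i+1) h1
          have h3 := fr11 hlab hds (i+2) h2
          have h4 := fr12 hlab hds (i+3) h3
          have h5 := fr13 hlab hds (i+4) h4
          exact ⟨i+5, by omega, h5⟩
        · have h2 := fr10 hlab hds i hK
          have h3 := fr11 hlab hds (i+1) h2
          have h4 := fr12 hlab hds (i+2) h3
          have h5 := fr13 hlab hds (i+3) h4
          exact ⟨i+4, by omega, h5⟩
        · have h3 := fr11 hlab hds i hK
          have h4 := fr12 hlab hds (i+1) h3
          have h5 := fr13 hlab hds (i+2) h4
          exact ⟨i+3, by omega, h5⟩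
        · have h4 := fr12 hlab hds i hK
          have h5 := fr13 hlab hds (i+1) h4
          exact ⟨i+2, by omega, h5⟩
        · have h5 := fr13 hlab hds i hK
          exact ⟨i+1, by omega, h5⟩
      intro n
      obtain ⟨j, hj, hK⟩ := reach (max n (i0+1)) (le_max_right _ _)
      obtain ⟨hc, hm⟩ := fr8 hlab hds j hK
      refine ⟨j, le_trans (le_max_left _ _) hj, le_trans (le_max_right _ _) hj, SL,
        .caseAdd1 x3 (.s x4) x5 0 1 2, nn j, by rw [hT j, hK]; rfl, hn j, ?_⟩
      beta_reduce
      rw [hK, hc]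
      exact ⟨rfl, hm, rfl⟩

lemma noEqLa0 : P.NoEqLa := by
  rintro ⟨σ, S, r, hl, v1, v2, t, u, rfl⟩
  have hl' : lab σ = some (S, Rule.eqLa v1 v2 t u) := hl
  have hk : keyProp σ := dom_inv (by rw [hl']; exact fun hc => Option.some_ne_none _ hc)
  unfold keyProp at hk
  rcases hk with hk|hk|hk|hk|hk|hk|hk|hk|hk|hk|hk|hk|hk|hk|hk|hk|hk|hk|hk|hk|hk|hk|hk|hk|hk <;>
    subst hk <;> injection hl' with h1 <;> injection h1 with hS hr <;> exact Rule.noConfusion hr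

lemma concl0 : P.Concl goalSeq := ⟨.caseAdd2 x0 x1 x2 3 4 5, rfl⟩

end BT

/-- `Add2(x,y,z) ⊢ Add1(x,y,z)` is provable in `CLKID^ω`. -/
theorem add2_add1_provable_in_CLKIDomega : ProvableW goalSeq :=
  ⟨BT.P, ⟨BT.T, BT.unf, BT.gtc⟩, BT.noEqLa0, BT.concl0⟩

end CLKID
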